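/- arXiv:2302.03798 — 8 statements merged into one kernel-verified Lean document; each statement's English description precedes it below -/
import Mathlib

section
/- Let k ≥ 2. If w₁, w₂ ∈ ℝ^k − {0} are such that Θ(w₁, w₂) ≥ α and ‖w₁‖/‖w₂‖ ≤ L for some α ∈ [0, π] and L ≥ 1, then ‖w₁ + w₂‖ ≤ (1 − α²/(16L))·‖w₁‖ + ‖w₂‖. -/
private lemma strong_tri_aux (a b c x α L p : ℝ)
    (ha0 : 0 < a) (hb0 : 0 < b) (hL : 1 ≤ L) (hα0 : 0 ≤ α)
    (hp0 : 0 < p) (hp16 : p ^ 2 < 16) (hα2 : α ^ 2 ≤ p ^ 2)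
    (hab : a ≤ L * b)
    (hc : c ≤ 1 - 2 / p ^ 2 * α ^ 2)
    (hx : 0 ≤ x) (hxsq : x ^ 2 = a ^ 2 + 2 * (c * (a * b)) + b ^ 2) :
    x ≤ (1 - α ^ 2 / (16 * L)) * a + b := by
  have hL0 : 0 < L := by linarith
  have hε0 : 0 ≤ α ^ 2 / (16 * L) := by positivity
  have hεL : α ^ 2 / (16 * L) * (16 * L) = α ^ 2 := by field_simp
  have hε16 : α ^ 2 / (16 * L) ≤ α ^ 2 / 16 := by
    rw [div_le_div_iff₀ (by positivity) (by norm_num)]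
    nlinarith
  generalize hεdef : α ^ 2 / (16 * L) = ε at hε0 hεL hε16 ⊢
  have hε1 : ε < 1 := by linarith
  have ht0 : 0 < a * b := mul_pos ha0 hb0
  -- replace the π-dependent bound with a clean one
  have hd : α ^ 2 / 8 ≤ 2 / p ^ 2 * α ^ 2 := by
    rw [div_le_iff₀ (by norm_num), div_mul_eq_mul_div, div_mul_eq_mul_div,
      le_div_iff₀ (by positivity)]
    nlinarith [mul_nonneg (sq_nonneg α) (by linarith : (0:ℝ) ≤ 16 - p ^ 2)]
  have hc' : c ≤ 1 - α ^ 2 / 8 := by linarith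
  have hA : c * (a * b) ≤ (1 - α ^ 2 / 8) * (a * b) :=
    mul_le_mul_of_nonneg_right hc' ht0.le
  have h1 : a ^ 2 ≤ L * (a * b) := by nlinarith
  have h2 : ε * a ^ 2 ≤ ε * (L * (a * b)) := mul_le_mul_of_nonneg_left h1 hε0
  have hεLval : ε * L = α ^ 2 / 16 := by linarith
  have h3 : ε * (L * (a * b)) = α ^ 2 / 16 * (a * b) := by
    rw [← mul_assoc, hεLval]
  have hF3 : ε * a ^ 2 ≤ α ^ 2 / 16 * (a * b) := by rw [← h3]; exact h2
  have hF4 : ε * (a * b) ≤ α ^ 2 / 16 * (a * b) :=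
    mul_le_mul_of_nonneg_right hε16 ht0.le
  have expand : ((1 - ε) * a + b) ^ 2
      = a ^ 2 + b ^ 2 + 2 * (a * b) + ε ^ 2 * a ^ 2 - 2 * (ε * a ^ 2)
        - 2 * (ε * (a * b)) := by ring
  have hkey : x ^ 2 ≤ ((1 - ε) * a + b) ^ 2 := by
    rw [expand, hxsq]
    linarith [sq_nonneg (ε * a)]
  have hRHS : 0 ≤ (1 - ε) * a + b := by nlinarith [mul_pos (by linarith : (0:ℝ) < 1 - ε) ha0]
  have h := Real.sqrt_le_sqrt hkey
  rwa [Real.sqrt_sq hx, Real.sqrt_sq hRHS] at h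

/-- **Strong triangle inequality.** If two nonzero vectors in `ℝ^k` make an angle at
least `α` and their norm ratio is at most `L`, then
`‖w₁ + w₂‖ ≤ (1 − α²/(16L))·‖w₁‖ + ‖w₂‖`. -/
theorem strong_triangle_inequality
    (k : ℕ) (hk : 2 ≤ k)
    (w₁ w₂ : EuclideanSpace ℝ (Fin k)) (h₁ : w₁ ≠ 0) (h₂ : w₂ ≠ 0)
    (α L : ℝ) (hα0 : 0 ≤ α) (hαπ : α ≤ Real.pi) (hL : 1 ≤ L)
    (hangle : α ≤ InnerProductGeometry.angle w₁ w₂)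
    (hnorm : ‖w₁‖ / ‖w₂‖ ≤ L) :
    ‖w₁ + w₂‖ ≤ (1 - α ^ 2 / (16 * L)) * ‖w₁‖ + ‖w₂‖ := by
  have ha0 : 0 < ‖w₁‖ := norm_pos_iff.mpr h₁
  have hb0 : 0 < ‖w₂‖ := norm_pos_iff.mpr h₂
  have hab : ‖w₁‖ ≤ L * ‖w₂‖ := by
    rw [div_le_iff₀ hb0] at hnorm; linarith
  have hθπ : InnerProductGeometry.angle w₁ w₂ ≤ Real.pi :=
    InnerProductGeometry.angle_le_pi _ _
  have hcosθ : Real.cos (InnerProductGeometry.angle w₁ w₂) ≤ Real.cos α :=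
    Real.cos_le_cos_of_nonneg_of_le_pi hα0 hθπ hangle
  have hcosα : Real.cos α ≤ 1 - 2 / Real.pi ^ 2 * α ^ 2 :=
    Real.cos_le_one_sub_mul_cos_sq (by rwa [abs_of_nonneg hα0])
  have hπ : Real.pi < 4 := by linarith [Real.pi_lt_d2]
  have hπ0 : 0 < Real.pi := Real.pi_pos
  have hinner : (inner ℝ w₁ w₂ : ℝ)
      = Real.cos (InnerProductGeometry.angle w₁ w₂) * (‖w₁‖ * ‖w₂‖) :=
    (InnerProductGeometry.cos_angle_mul_norm_mul_norm w₁ w₂).symm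
  have hsq : ‖w₁ + w₂‖ ^ 2 = ‖w₁‖ ^ 2
      + 2 * (Real.cos (InnerProductGeometry.angle w₁ w₂) * (‖w₁‖ * ‖w₂‖)) + ‖w₂‖ ^ 2 := by
    rw [norm_add_sq_real, hinner]
  exact strong_tri_aux ‖w₁‖ ‖w₂‖ _ _ α L Real.pi ha0 hb0 hL hα0 hπ0
    (by nlinarith) (by nlinarith) hab (hcosθ.trans hcosα) (norm_nonneg _) hsq
end

section
/- Let V be a real inner product space and let u, v ∈ V be nonzero vectors. Then sin(Θ(u, v)) ≤ ‖u − v‖ / max(‖u‖, ‖v‖). -/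
open InnerProductGeometry in
private lemma sin_angle_mul_norm_le
    {V : Type*} [NormedAddCommGroup V] [InnerProductSpace ℝ V]
    (u v : V) (hu : u ≠ 0) :
    Real.sin (angle u v) * ‖v‖ ≤ ‖u - v‖ := by
  have hu' : (0:ℝ) < ‖u‖ := norm_pos_iff.mpr hu
  have key : Real.sin (angle u v) * (‖u‖ * ‖v‖) ≤ ‖u - v‖ * ‖u‖ := by
    rw [sin_angle_mul_norm_mul_norm, real_inner_self_eq_norm_mul_norm,
      real_inner_self_eq_norm_mul_norm]
    rw [Real.sqrt_le_iff]
    refine ⟨by positivity, ?_⟩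
    have h := norm_sub_sq_real u v
    nlinarith [sq_nonneg (‖u‖ * ‖u‖ - (inner ℝ u v : ℝ)), sq_nonneg (‖u - v‖ * ‖u‖),
      norm_nonneg (u - v), norm_nonneg u]
  calc Real.sin (angle u v) * ‖v‖ = Real.sin (angle u v) * (‖u‖ * ‖v‖) / ‖u‖ := by
        field_simp
    _ ≤ ‖u - v‖ * ‖u‖ / ‖u‖ := by gcongr
    _ = ‖u - v‖ := by field_simp

/-- **Sine law estimate.** For nonzero vectors `u, v` in a real inner product space,
`sin(Θ(u, v)) ≤ ‖u − v‖ / max(‖u‖, ‖v‖)`. -/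
theorem sin_angle_le_dist_div_max_norm
    {V : Type*} [NormedAddCommGroup V] [InnerProductSpace ℝ V]
    (u v : V) (hu : u ≠ 0) (hv : v ≠ 0) :
    Real.sin (InnerProductGeometry.angle u v) ≤ ‖u - v‖ / max ‖u‖ ‖v‖ := by
  have hmax : (0:ℝ) < max ‖u‖ ‖v‖ := lt_max_of_lt_left (norm_pos_iff.mpr hu)
  rw [le_div_iff₀ hmax]
  rcases max_cases ‖u‖ ‖v‖ with ⟨h, _⟩ | ⟨h, _⟩
  · rw [h, InnerProductGeometry.angle_comm, ← norm_neg (u - v), neg_sub]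
    exact sin_angle_mul_norm_le v u hv
  · rw [h]
    exact sin_angle_mul_norm_le u v hu
end

section
/- For every open set U ⊆ ℝ^d with μ(U ∩ Δ₀) > 0 there exists m₀ ∈ ℕ such that for every integer m ≥ m₀ there is a word w of length m with f_w(Δ₀) ⊆ U. -/
open MeasureTheory

/-- `wordMap f w` is the composition `f_{j₁} ∘ ⋯ ∘ f_{j_n}` for the word `w = (j₁, …, j_n)`.
The sets `wordMap f w '' Δ₀` are the cylinders. -/
def wordMap {J E : Type*} (f : J → E → E) : List J → E → E
  | [] => id
  | j :: w => f j ∘ wordMap f w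

/-- **Cylinders inside open sets.** In the countable contracting iterated function system
setting, for every open set `U` with `μ(U ∩ Δ₀) > 0` there exists `m₀` such that for every
`m ≥ m₀` some cylinder of length `m` is contained in `U`. -/
theorem cylinder_in_open_set
    {d : ℕ} (hd : 1 ≤ d) {J : Type*} [Countable J]
    (Δ₀ : Set (EuclideanSpace ℝ (Fin d)))
    (hne : Δ₀.Nonempty) (hbdd : Bornology.IsBounded Δ₀) (hopen : IsOpen Δ₀)
    (lam : ℝ) (hlam0 : 0 < lam) (hlam1 : lam < 1)
    (f : J → EuclideanSpace ℝ (Fin d) → EuclideanSpace ℝ (Fin d))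
    (hmaps : ∀ j, Set.MapsTo (f j) Δ₀ Δ₀)
    (hlip : ∀ j, ∀ x ∈ Δ₀, ∀ y ∈ Δ₀, dist (f j x) (f j y) ≤ lam * dist x y)
    (μ : Measure (EuclideanSpace ℝ (Fin d))) [IsFiniteMeasure μ]
    (hμne : μ ≠ 0) (hμsupp : μ Δ₀ᶜ = 0)
    (hdisj : ∀ n : ℕ, 1 ≤ n → ∀ w w' : List J, w.length = n → w'.length = n → w ≠ w' →
      Disjoint (wordMap f w '' Δ₀) (wordMap f w' '' Δ₀))
    (hfull : ∀ n : ℕ, 1 ≤ n →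
      μ (⋃ w ∈ {w : List J | w.length = n}, wordMap f w '' Δ₀) = μ Δ₀)
    (U : Set (EuclideanSpace ℝ (Fin d))) (hU : IsOpen U) (hUμ : 0 < μ (U ∩ Δ₀)) :
    ∃ m₀ : ℕ, ∀ m : ℕ, m₀ ≤ m → ∃ w : List J, w.length = m ∧ wordMap f w '' Δ₀ ⊆ U := by
  classical
  have hmapsW : ∀ w : List J, Set.MapsTo (wordMap f w) Δ₀ Δ₀ := by
    intro w; induction w with
    | nil => exact fun x hx => hx
    | cons j w ih => exact (hmaps j).comp ih
  have hlipW : ∀ w : List J, ∀ x ∈ Δ₀, ∀ y ∈ Δ₀,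
      dist (wordMap f w x) (wordMap f w y) ≤ lam ^ w.length * dist x y := by
    intro w; induction w with
    | nil => intro x hx y hy; simp [wordMap]
    | cons j w ih =>
      intro x hx y hy
      calc dist (wordMap f (j :: w) x) (wordMap f (j :: w) y)
          = dist (f j (wordMap f w x)) (f j (wordMap f w y)) := rfl
        _ ≤ lam * dist (wordMap f w x) (wordMap f w y) :=
            hlip j _ (hmapsW w hx) _ (hmapsW w hy)
        _ ≤ lam * (lam ^ w.length * dist x y) :=
            mul_le_mul_of_nonneg_left (ih x hx y hy) hlam0.le
        _ = lam ^ (j :: w).length * dist x y := by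
            simp [List.length_cons, pow_succ]; ring
  -- selection lemma: for measurable A ⊆ Δ₀ of positive measure, every length m ≥ 1 has a
  -- cylinder meeting A
  have hsel : ∀ A : Set (EuclideanSpace ℝ (Fin d)), MeasurableSet A → A ⊆ Δ₀ → 0 < μ A →
      ∀ m : ℕ, 1 ≤ m → ∃ w : List J, w.length = m ∧ (wordMap f w '' Δ₀ ∩ A).Nonempty := by
    intro A hA hAsub hApos m hm
    set S := ⋃ w ∈ {w : List J | w.length = m}, wordMap f w '' Δ₀ with hS
    have hSsub : S ⊆ Δ₀ := by
      intro x hx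
      simp only [hS, Set.mem_iUnion, Set.mem_setOf_eq] at hx
      obtain ⟨w, hw, y, hy, rfl⟩ := hx
      exact hmapsW w hy
    have hSfull : μ S = μ Δ₀ := hfull m hm
    have h1 : μ (S ∩ A) + μ (S \ A) = μ Δ₀ := by
      rw [measure_inter_add_diff S hA, hSfull]
    have h2 : μ Δ₀ = μ A + μ (Δ₀ \ A) := by
      rw [← measure_inter_add_diff Δ₀ hA, Set.inter_eq_self_of_subset_right hAsub]
    have h3 : μ (S \ A) ≤ μ (Δ₀ \ A) := measure_mono (Set.diff_subset_diff_left hSsub)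
    have h4 : μ A ≤ μ (S ∩ A) := by
      have hle : μ A + μ (Δ₀ \ A) ≤ μ (S ∩ A) + μ (Δ₀ \ A) := by
        calc μ A + μ (Δ₀ \ A) = μ (S ∩ A) + μ (S \ A) := by rw [← h2, h1]
          _ ≤ μ (S ∩ A) + μ (Δ₀ \ A) := add_le_add le_rfl h3
      exact (ENNReal.add_le_add_iff_right (measure_ne_top μ _)).mp hle
    have hpos : μ (S ∩ A) ≠ 0 := (lt_of_lt_of_le hApos h4).ne'
    have hrw : S ∩ A = ⋃ w ∈ {w : List J | w.length = m}, (wordMap f w '' Δ₀ ∩ A) := by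
      simp only [hS, Set.iUnion_inter]
    rw [hrw] at hpos
    have hcnt : ({w : List J | w.length = m}).Countable := Set.to_countable _
    by_contra hcon
    push_neg at hcon
    apply hpos
    rw [measure_biUnion_null_iff hcnt]
    intro w hw
    rw [hcon w hw]
    exact measure_empty
  by_cases hUc : Uᶜ = ∅
  · -- U = univ
    have hUuniv : U = Set.univ := Set.compl_empty_iff.mp hUc
    have hJ : Nonempty J := by
      by_contra h
      rw [not_nonempty_iff] at h
      have hempty : ({w : List J | w.length = 1}) = ∅ := by
        ext w
        simp only [Set.mem_setOf_eq, Set.mem_empty_iff_false, iff_false]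
        intro hw
        cases w with
        | nil => simp at hw
        | cons j _ => exact h.false j
      have h0 : μ Δ₀ = 0 := by
        rw [← hfull 1 le_rfl, hempty]; simp
      have huniv : μ Set.univ = 0 := by
        refine le_antisymm ?_ zero_le
        calc μ Set.univ = μ (Δ₀ ∪ Δ₀ᶜ) := by rw [Set.union_compl_self]
          _ ≤ μ Δ₀ + μ Δ₀ᶜ := measure_union_le _ _
          _ = 0 := by rw [h0, hμsupp, add_zero]
      exact hμne (Measure.measure_univ_eq_zero.mp huniv)
    obtain ⟨j⟩ := hJ
    exact ⟨0, fun m _ => ⟨List.replicate m j, List.length_replicate,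
      by rw [hUuniv]; exact Set.subset_univ _⟩⟩
  · have hUcne : Uᶜ.Nonempty := Set.nonempty_iff_ne_empty.mpr hUc
    have hUcclosed : IsClosed Uᶜ := hU.isClosed_compl
    set A : ℕ → Set (EuclideanSpace ℝ (Fin d)) :=
      fun k => (U ∩ Δ₀) ∩ {x | (1 : ℝ) / (k + 1) ≤ Metric.infDist x Uᶜ} with hAdef
    have hAmeas : ∀ k, MeasurableSet (A k) := by
      intro k
      exact (hU.measurableSet.inter hopen.measurableSet).inter
        ((isClosed_le continuous_const (Metric.continuous_infDist_pt Uᶜ)).measurableSet)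
    have hAsub : ∀ k, A k ⊆ Δ₀ := fun k x hx => hx.1.2
    have hcover : U ∩ Δ₀ ⊆ ⋃ k : ℕ, A k := by
      intro x hx
      have hxU : x ∈ U := hx.1
      have hpos : 0 < Metric.infDist x Uᶜ := by
        rw [← hUcclosed.notMem_iff_infDist_pos hUcne]
        simpa using hxU
      obtain ⟨k, hk⟩ := exists_nat_one_div_lt hpos
      exact Set.mem_iUnion.mpr ⟨k, hx, hk.le⟩
    obtain ⟨k, hk⟩ : ∃ k : ℕ, μ (A k) ≠ 0 := by
      by_contra h
      push_neg at h
      have : μ (⋃ k : ℕ, A k) = 0 := by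
        rw [measure_iUnion_null_iff]; exact h
      exact absurd (le_trans (measure_mono hcover) this.le) (by simpa using hUμ.ne')
    have hkpos : 0 < μ (A k) := hk.bot_lt
    set ε : ℝ := (1 : ℝ) / (k + 1) with hε
    have hεpos : 0 < ε := by positivity
    set D : ℝ := Metric.diam Δ₀ with hD
    have htend : Filter.Tendsto (fun n : ℕ => lam ^ n * D) Filter.atTop (nhds 0) := by
      have := tendsto_pow_atTop_nhds_zero_of_lt_one hlam0.le hlam1
      simpa using this.mul_const D
    have hev : ∀ᶠ n : ℕ in Filter.atTop, lam ^ n * D < ε :=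
      htend.eventually_lt_const hεpos
    obtain ⟨n₀, hn₀⟩ := Filter.eventually_atTop.mp hev
    refine ⟨max n₀ 1, fun m hm => ?_⟩
    have hm1 : 1 ≤ m := le_trans (le_max_right n₀ 1) hm
    have hmn₀ : n₀ ≤ m := le_trans (le_max_left n₀ 1) hm
    obtain ⟨w, hwlen, x, hxC, hxA⟩ := hsel (A k) (hAmeas k) (hAsub k) hkpos m hm1
    refine ⟨w, hwlen, ?_⟩
    obtain ⟨x₀, hx₀, rfl⟩ := hxC
    rintro y ⟨y₀, hy₀, rfl⟩
    have hdist : dist (wordMap f w y₀) (wordMap f w x₀) < ε := by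
      calc dist (wordMap f w y₀) (wordMap f w x₀)
          ≤ lam ^ w.length * dist y₀ x₀ := hlipW w y₀ hy₀ x₀ hx₀
        _ ≤ lam ^ m * D := by
            rw [hwlen]
            exact mul_le_mul_of_nonneg_left (Metric.dist_le_diam_of_mem hbdd hy₀ hx₀)
              (pow_nonneg hlam0.le m)
        _ < ε := hn₀ m hmn₀
    by_contra hyU
    have hinf : Metric.infDist (wordMap f w x₀) Uᶜ ≤ dist (wordMap f w x₀) (wordMap f w y₀) :=
      Metric.infDist_le_dist_of_mem hyU
    have hεle : ε ≤ Metric.infDist (wordMap f w x₀) Uᶜ := hxA.2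
    rw [dist_comm] at hdist
    linarith
end

section
/- Assume in addition that each f_j is an open map and that μ(C) > 0 for every cylinder C. Then for every r > 0 there exists c > 0 such that for every x ∈ Δ₀ with the property that μ(B(x, s)) > 0 for all s > 0, there exists a cylinder C with C ⊆ B(x, r), diam(C) > c, and μ(C) > c. -/
open MeasureTheory

lemma wordMap_mapsTo {J E : Type*} (f : J → E → E) (Δ₀ : Set E)
    (hmaps : ∀ j, Set.MapsTo (f j) Δ₀ Δ₀) :
    ∀ w : List J, Set.MapsTo (wordMap f w) Δ₀ Δ₀
  | [] => Set.mapsTo_id _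
  | j :: w => (hmaps j).comp (wordMap_mapsTo f Δ₀ hmaps w)

lemma wordMap_dist {J E : Type*} [PseudoMetricSpace E] (f : J → E → E) (Δ₀ : Set E)
    (lam : ℝ) (hlam0 : 0 ≤ lam)
    (hmaps : ∀ j, Set.MapsTo (f j) Δ₀ Δ₀)
    (hlip : ∀ j, ∀ x ∈ Δ₀, ∀ y ∈ Δ₀, dist (f j x) (f j y) ≤ lam * dist x y) :
    ∀ w : List J, ∀ x ∈ Δ₀, ∀ y ∈ Δ₀,
      dist (wordMap f w x) (wordMap f w y) ≤ lam ^ w.length * dist x y := by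
  intro w
  induction w with
  | nil => intro x hx y hy; simp [wordMap]
  | cons j w ih =>
    intro x hx y hy
    have hx' := wordMap_mapsTo f Δ₀ hmaps w hx
    have hy' := wordMap_mapsTo f Δ₀ hmaps w hy
    calc dist (wordMap f (j :: w) x) (wordMap f (j :: w) y)
        = dist (f j (wordMap f w x)) (f j (wordMap f w y)) := rfl
      _ ≤ lam * dist (wordMap f w x) (wordMap f w y) := hlip j _ hx' _ hy'
      _ ≤ lam * (lam ^ w.length * dist x y) :=
          mul_le_mul_of_nonneg_left (ih x hx y hy) hlam0
      _ = lam ^ (j :: w).length * dist x y := by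
          rw [List.length_cons, pow_succ]; ring

lemma wordMap_isOpen {J : Type*} {E : Type*} [TopologicalSpace E] (f : J → E → E) (Δ₀ : Set E)
    (hopen : IsOpen Δ₀)
    (hmaps : ∀ j, Set.MapsTo (f j) Δ₀ Δ₀)
    (hopenmap : ∀ j, ∀ V : Set E, IsOpen V → V ⊆ Δ₀ → IsOpen (f j '' V)) :
    ∀ w : List J, IsOpen (wordMap f w '' Δ₀) ∧ wordMap f w '' Δ₀ ⊆ Δ₀ := by
  intro w
  induction w with
  | nil => simpa [wordMap] using hopen
  | cons j w ih =>
    have him : wordMap f (j :: w) '' Δ₀ = f j '' (wordMap f w '' Δ₀) := by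
      rw [← Set.image_comp]; rfl
    constructor
    · rw [him]; exact hopenmap j _ ih.1 ih.2
    · rw [him]
      exact (Set.image_mono ih.2 : f j '' _ ⊆ f j '' _).trans ((hmaps j).image_subset)

/-- **Uniform lower bound on diameters and measures of cylinders inside small balls.**
In the countable contracting iterated function system setting, assuming additionally that
each branch is an open map and that every cylinder has positive measure, for every `r > 0`
there is `c > 0` such that every point of `Δ₀` all of whose balls have positive measure
admits a cylinder inside `B(x, r)` of diameter `> c` and measure `> c`. -/
theorem cylinder_diam_measure_lower_bound
    {d : ℕ} (hd : 1 ≤ d) {J : Type*} [Countable J]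
    (Δ₀ : Set (EuclideanSpace ℝ (Fin d)))
    (hne : Δ₀.Nonempty) (hbdd : Bornology.IsBounded Δ₀) (hopen : IsOpen Δ₀)
    (lam : ℝ) (hlam0 : 0 < lam) (hlam1 : lam < 1)
    (f : J → EuclideanSpace ℝ (Fin d) → EuclideanSpace ℝ (Fin d))
    (hmaps : ∀ j, Set.MapsTo (f j) Δ₀ Δ₀)
    (hlip : ∀ j, ∀ x ∈ Δ₀, ∀ y ∈ Δ₀, dist (f j x) (f j y) ≤ lam * dist x y)
    (μ : Measure (EuclideanSpace ℝ (Fin d))) [IsFiniteMeasure μ]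
    (hμne : μ ≠ 0) (hμsupp : μ Δ₀ᶜ = 0)
    (hdisj : ∀ n : ℕ, 1 ≤ n → ∀ w w' : List J, w.length = n → w'.length = n → w ≠ w' →
      Disjoint (wordMap f w '' Δ₀) (wordMap f w' '' Δ₀))
    (hfull : ∀ n : ℕ, 1 ≤ n →
      μ (⋃ w ∈ {w : List J | w.length = n}, wordMap f w '' Δ₀) = μ Δ₀)
    (hopenmap : ∀ j, ∀ V : Set (EuclideanSpace ℝ (Fin d)), IsOpen V → V ⊆ Δ₀ →
      IsOpen (f j '' V))
    (hcylpos : ∀ w : List J, w ≠ [] → 0 < μ (wordMap f w '' Δ₀)) :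
    ∀ r : ℝ, 0 < r → ∃ c : ℝ, 0 < c ∧
      ∀ x ∈ Δ₀, (∀ s : ℝ, 0 < s → 0 < μ (Metric.ball x s)) →
        ∃ w : List J, w ≠ [] ∧ wordMap f w '' Δ₀ ⊆ Metric.ball x r ∧
          c < Metric.diam (wordMap f w '' Δ₀) ∧
          ENNReal.ofReal c < μ (wordMap f w '' Δ₀) := by
  intro r hr
  -- basic facts about cylinders
  have hcylopen := wordMap_isOpen f Δ₀ hopen hmaps hopenmap
  have hcyl_diam : ∀ w : List J,
      Metric.diam (wordMap f w '' Δ₀) ≤ lam ^ w.length * Metric.diam Δ₀ := by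
    intro w
    apply Metric.diam_le_of_forall_dist_le
      (mul_nonneg (pow_nonneg hlam0.le _) Metric.diam_nonneg)
    rintro _ ⟨a, ha, rfl⟩ _ ⟨b, hb, rfl⟩
    calc dist (wordMap f w a) (wordMap f w b) ≤ lam ^ w.length * dist a b :=
          wordMap_dist f Δ₀ lam hlam0.le hmaps hlip w a ha b hb
      _ ≤ lam ^ w.length * Metric.diam Δ₀ :=
          mul_le_mul_of_nonneg_left (Metric.dist_le_diam_of_mem hbdd ha hb)
            (pow_nonneg hlam0.le _)
  -- positive diameter of nonempty open subsets of Δ₀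
  have diam_pos : ∀ S : Set (EuclideanSpace ℝ (Fin d)), IsOpen S → S.Nonempty → S ⊆ Δ₀ →
      0 < Metric.diam S := by
    intro S hS hSne hSsub
    obtain ⟨x, hx⟩ := hSne
    obtain ⟨ε, hε, hball⟩ := Metric.isOpen_iff.1 hS x hx
    set y := x + EuclideanSpace.single (⟨0, hd⟩ : Fin d) (ε / 2) with hy
    have hdist : dist y x = ε / 2 := by
      rw [dist_eq_norm, hy, add_sub_cancel_left, EuclideanSpace.norm_single,
        Real.norm_eq_abs, abs_of_pos (by linarith : (0:ℝ) < ε / 2)]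
    have hyS : y ∈ S := hball (by rw [Metric.mem_ball, hdist]; linarith)
    have := Metric.dist_le_diam_of_mem (hbdd.subset hSsub) hyS hx
    linarith [hdist ▸ this]
  -- the per-point existence of a good cylinder
  have key : ∀ y : EuclideanSpace ℝ (Fin d), 0 < μ (Metric.ball y (r / 4)) →
      ∃ w : List J, w ≠ [] ∧ wordMap f w '' Δ₀ ⊆ Metric.ball y (r / 2) ∧
        0 < Metric.diam (wordMap f w '' Δ₀) ∧ 0 < μ (wordMap f w '' Δ₀) := by
    intro y hy
    -- choose n with lam ^ n * diam Δ₀ < r / 4, n ≥ 1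
    obtain ⟨m, hm⟩ := exists_pow_lt_of_lt_one
      (x := (r / 4) / (Metric.diam Δ₀ + 1)) (y := lam)
      (by positivity) hlam1
    set n := m + 1 with hn
    have hnpow : lam ^ n * Metric.diam Δ₀ < r / 4 := by
      have h1 : lam ^ n ≤ lam ^ m := pow_le_pow_of_le_one hlam0.le hlam1.le (by omega)
      have h2 : lam ^ n * Metric.diam Δ₀ ≤ lam ^ m * (Metric.diam Δ₀ + 1) := by
        apply mul_le_mul h1 (by linarith [Metric.diam_nonneg (s := Δ₀)])
          Metric.diam_nonneg (pow_nonneg hlam0.le _)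
      have h3 : lam ^ m * (Metric.diam Δ₀ + 1) < r / 4 := by
        rw [← lt_div_iff₀ (by positivity)]
        exact hm
      linarith
    -- the union of cylinders of length n has full measure
    set U := ⋃ w ∈ {w : List J | w.length = n}, wordMap f w '' Δ₀ with hU
    have hUopen : IsOpen U := by
      apply isOpen_biUnion
      intro w _
      exact (hcylopen w).1
    have hμuniv : μ Set.univ = μ Δ₀ := by
      have : μ Set.univ ≤ μ Δ₀ + μ Δ₀ᶜ := by
        rw [← Set.union_compl_self Δ₀]; exact measure_union_le _ _
      rw [hμsupp, add_zero] at this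
      exact le_antisymm this (measure_mono (Set.subset_univ _))
    have hUc : μ Uᶜ = 0 := by
      rw [measure_compl hUopen.measurableSet (measure_ne_top μ U)]
      rw [hμuniv, hfull n (by omega)]
      simp
    have hball : 0 < μ (Metric.ball y (r / 4) ∩ U) := by
      by_contra hc
      push_neg at hc
      have hc0 : μ (Metric.ball y (r / 4) ∩ U) = 0 := le_antisymm hc zero_le
      have : μ (Metric.ball y (r / 4)) ≤ μ (Metric.ball y (r / 4) ∩ U) + μ Uᶜ := by
        apply (measure_mono _).trans (measure_union_le _ _)
        intro z hz
        by_cases hzU : z ∈ U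
        · exact Or.inl ⟨hz, hzU⟩
        · exact Or.inr hzU
      rw [hc0, hUc, add_zero] at this
      exact absurd (le_antisymm this zero_le) hy.ne'
    -- find a single cylinder meeting the ball
    have hcnt : ({w : List J | w.length = n} : Set (List J)).Countable :=
      Set.to_countable _
    have : ∃ w ∈ {w : List J | w.length = n},
        0 < μ (wordMap f w '' Δ₀ ∩ Metric.ball y (r / 4)) := by
      by_contra hc
      push_neg at hc
      simp only [le_zero_iff] at hc
      have : μ (⋃ w ∈ {w : List J | w.length = n},
          wordMap f w '' Δ₀ ∩ Metric.ball y (r / 4)) = 0 :=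
        (measure_biUnion_null_iff hcnt).2 hc
      have heq : Metric.ball y (r / 4) ∩ U ⊆
          ⋃ w ∈ {w : List J | w.length = n}, wordMap f w '' Δ₀ ∩ Metric.ball y (r / 4) := by
        rintro z ⟨hz1, hz2⟩
        simp only [hU, Set.mem_iUnion] at hz2 ⊢
        obtain ⟨w, hw, hzw⟩ := hz2
        exact ⟨w, hw, hzw, hz1⟩
      exact absurd (le_antisymm ((measure_mono heq).trans this.le) zero_le) hball.ne'
    obtain ⟨w, hwlen, hwpos⟩ := this
    have hwne : w ≠ [] := by
      intro h
      rw [h] at hwlen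
      simp only [Set.mem_setOf_eq, List.length_nil] at hwlen
      omega
    have hmeets : (wordMap f w '' Δ₀ ∩ Metric.ball y (r / 4)).Nonempty := by
      rcases Set.eq_empty_or_nonempty (wordMap f w '' Δ₀ ∩ Metric.ball y (r / 4)) with h | h
      · rw [h] at hwpos; simp at hwpos
      · exact h
    obtain ⟨z, hzC, hzB⟩ := hmeets
    refine ⟨w, hwne, ?_, ?_, hcylpos w hwne⟩
    · intro u hu
      have h1 : dist u z ≤ Metric.diam (wordMap f w '' Δ₀) :=
        Metric.dist_le_diam_of_mem (hbdd.subset (hcylopen w).2) hu hzC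
      have h2 : Metric.diam (wordMap f w '' Δ₀) < r / 4 := by
        have := hcyl_diam w
        rw [hwlen] at this
        linarith
      have h3 : dist z y < r / 4 := hzB
      rw [Metric.mem_ball]
      calc dist u y ≤ dist u z + dist z y := dist_triangle _ _ _
        _ < r / 4 + r / 4 := by linarith
        _ = r / 2 := by ring
    · exact diam_pos _ (hcylopen w).1 ⟨z, hzC⟩ (hcylopen w).2
  -- the compact set of points all of whose balls have positive measure
  set K := {x : EuclideanSpace ℝ (Fin d) | ∀ s : ℝ, 0 < s → 0 < μ (Metric.ball x s)} with hK
  have hKclosed : IsClosed K := by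
    rw [← isOpen_compl_iff, Metric.isOpen_iff]
    intro x hx
    simp only [hK, Set.mem_compl_iff, Set.mem_setOf_eq, not_forall] at hx
    obtain ⟨s, hs, hxs⟩ := hx
    push_neg at hxs
    have hxs0 : μ (Metric.ball x s) = 0 := le_antisymm hxs zero_le
    refine ⟨s / 2, by linarith, ?_⟩
    intro z hz
    simp only [hK, Set.mem_compl_iff, Set.mem_setOf_eq, not_forall]
    refine ⟨s / 2, ⟨by linarith, ?_⟩⟩
    push_neg
    have : Metric.ball z (s / 2) ⊆ Metric.ball x s := by
      intro u hu
      rw [Metric.mem_ball] at *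
      calc dist u x ≤ dist u z + dist z x := dist_triangle _ _ _
        _ < s / 2 + s / 2 := by exact add_lt_add hu hz
        _ = s := by ring
    exact le_trans (measure_mono this) hxs0.le
  have hKsub : K ⊆ closure Δ₀ := by
    intro x hx
    by_contra hxc
    have : ∃ s > 0, Metric.ball x s ⊆ (closure Δ₀)ᶜ :=
      Metric.isOpen_iff.1 isClosed_closure.isOpen_compl x hxc
    obtain ⟨s, hs, hsub⟩ := this
    have h1 : μ (Metric.ball x s) ≤ μ Δ₀ᶜ := by
      apply measure_mono
      exact hsub.trans (Set.compl_subset_compl.2 subset_closure)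
    rw [hμsupp] at h1
    exact absurd (le_antisymm h1 zero_le) (hx s hs).ne'
  have hKcompact : IsCompact K :=
    (Metric.isCompact_of_isClosed_isBounded isClosed_closure hbdd.closure).of_isClosed_subset
      hKclosed hKsub
  -- cover K by balls of radius r/2 centered in K
  have hcover : K ⊆ ⋃ y ∈ K, Metric.ball y (r / 2) := by
    intro y hy
    simp only [Set.mem_iUnion]
    exact ⟨y, hy, Metric.mem_ball_self (by linarith)⟩
  obtain ⟨T, hTK, hTfin, hTcover⟩ := hKcompact.elim_finite_subcover_image
    (fun y _ => Metric.isOpen_ball) hcover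
  -- choose a cylinder for each center
  have hchoice : ∀ y : EuclideanSpace ℝ (Fin d), ∃ w : List J, y ∈ T →
      w ≠ [] ∧ wordMap f w '' Δ₀ ⊆ Metric.ball y (r / 2) ∧
        0 < Metric.diam (wordMap f w '' Δ₀) ∧ 0 < μ (wordMap f w '' Δ₀) := by
    intro y
    by_cases hy : y ∈ T
    · obtain ⟨w, hw⟩ := key y ((hTK hy) (r / 4) (by linarith))
      exact ⟨w, fun _ => hw⟩
    · exact ⟨[], fun h => absurd h hy⟩
  choose W hW using hchoice
  -- define c
  set g : EuclideanSpace ℝ (Fin d) → ℝ :=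
    fun y => min (Metric.diam (wordMap f (W y) '' Δ₀)) ((μ (wordMap f (W y) '' Δ₀)).toReal)
    with hg
  by_cases hT : T.Nonempty
  · have hTne : hTfin.toFinset.Nonempty := by
      rwa [Set.Finite.toFinset_nonempty]
    set c := (hTfin.toFinset.inf' hTne g) / 2 with hc
    have hgpos : ∀ y ∈ T, 0 < g y := by
      intro y hy
      obtain ⟨_, _, hd1, hd2⟩ := hW y hy
      apply lt_min hd1
      rw [ENNReal.toReal_pos_iff]
      exact ⟨hd2, measure_lt_top μ _⟩
    have hcpos : 0 < c := by
      rw [hc]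
      have : 0 < hTfin.toFinset.inf' hTne g := by
        rw [Finset.lt_inf'_iff]
        intro y hy
        exact hgpos y (hTfin.mem_toFinset.1 hy)
      linarith
    refine ⟨c, hcpos, ?_⟩
    intro x hxΔ hxball
    have hxK : x ∈ K := hxball
    have := hTcover hxK
    simp only [Set.mem_iUnion] at this
    obtain ⟨y, hyT, hxy⟩ := this
    obtain ⟨hwne, hwsub, _, hwpos⟩ := hW y hyT
    refine ⟨W y, hwne, ?_, ?_, ?_⟩
    · intro u hu
      have h1 : dist u y < r / 2 := hwsub hu
      have h2 : dist x y < r / 2 := hxy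
      rw [Metric.mem_ball]
      calc dist u x ≤ dist u y + dist y x := dist_triangle _ _ _
        _ < r / 2 + r / 2 := add_lt_add h1 (by rwa [dist_comm])
        _ = r := by ring
    · have h1 : hTfin.toFinset.inf' hTne g ≤ g y :=
        Finset.inf'_le _ (hTfin.mem_toFinset.2 hyT)
      have h2 : g y ≤ Metric.diam (wordMap f (W y) '' Δ₀) := min_le_left _ _
      have h4 : 0 < hTfin.toFinset.inf' hTne g := by
        rw [Finset.lt_inf'_iff]
        intro z hz
        exact hgpos z (hTfin.mem_toFinset.1 hz)
      calc c < hTfin.toFinset.inf' hTne g := by rw [hc]; linarith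
        _ ≤ g y := h1
        _ ≤ _ := h2
    · have h1 : hTfin.toFinset.inf' hTne g ≤ g y :=
        Finset.inf'_le _ (hTfin.mem_toFinset.2 hyT)
      have h2 : g y ≤ (μ (wordMap f (W y) '' Δ₀)).toReal := min_le_right _ _
      have hcy : c < (μ (wordMap f (W y) '' Δ₀)).toReal := by
        have := hgpos y hyT
        rw [hc]
        have h3 : hTfin.toFinset.inf' hTne g ≤ (μ (wordMap f (W y) '' Δ₀)).toReal :=
          le_trans h1 h2
        have h4 : 0 < hTfin.toFinset.inf' hTne g := by
          rw [Finset.lt_inf'_iff]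
          intro z hz
          exact hgpos z (hTfin.mem_toFinset.1 hz)
        linarith
      rw [ENNReal.ofReal_lt_iff_lt_toReal hcpos.le (measure_ne_top μ _)]
      exact hcy
  · -- T empty : K is empty, so the conclusion is vacuous
    refine ⟨1, one_pos, ?_⟩
    intro x hxΔ hxball
    have hxK : x ∈ K := hxball
    have := hTcover hxK
    simp only [Set.mem_iUnion] at this
    obtain ⟨y, hyT, _⟩ := this
    exact absurd ⟨y, hyT⟩ hT
end

section
/- Let h : Λ → ℝ be a bounded positive function and B ≥ 0 a constant such that |h(x) − h(x′)| ≤ B·h(x)·d(x, x′) for all x, x′ ∈ Λ. Define Lh(x) = ∑_{j∈J} e^{φ_j(x)} h(g_j(x)) for x ∈ Λ. Then for all x, x′ ∈ Λ: |Lh(x) − Lh(x′)| ≤ e^{C·d(x,x′)}·(C + B·κ)·Lh(x)·d(x, x′). -/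
lemma abs_one_sub_exp_le (u : ℝ) : |1 - Real.exp u| ≤ |u| * Real.exp |u| := by
  rcases le_or_gt 0 u with hu | hu
  · rw [abs_of_nonpos (by simpa using Real.one_le_exp hu), abs_of_nonneg hu]
    have h1 : 1 - u ≤ Real.exp (-u) := by
      have := Real.add_one_le_exp (-u); linarith
    have h2 : Real.exp u * (1 - Real.exp (-u)) ≤ Real.exp u * u := by
      apply mul_le_mul_of_nonneg_left _ (Real.exp_pos u).le
      nlinarith [Real.exp_pos u, Real.exp_neg u]
    rw [mul_sub, ← Real.exp_add] at h2
    simp at h2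
    linarith
  · rw [abs_of_nonneg (by nlinarith [Real.exp_lt_one_iff.2 hu]), abs_of_neg hu]
    have := Real.add_one_le_exp u
    have h3 : (1:ℝ) ≤ Real.exp (-u) := Real.one_le_exp (by linarith)
    nlinarith

lemma abs_exp_sub_exp_le (s t : ℝ) :
    |Real.exp s - Real.exp t| ≤ Real.exp s * (|s - t| * Real.exp |s - t|) := by
  have : Real.exp s - Real.exp t = Real.exp s * (1 - Real.exp (t - s)) := by
    rw [mul_sub, ← Real.exp_add]; ring_nf
  rw [this, abs_mul, abs_of_pos (Real.exp_pos s)]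
  have := abs_one_sub_exp_le (t - s)
  have h2 : |t - s| = |s - t| := abs_sub_comm t s
  rw [h2] at this
  exact mul_le_mul_of_nonneg_left this (Real.exp_pos s).le

set_option maxHeartbeats 1000000 in
/-- **Scalar Lasota–Yorke estimate.** For a countable family of `κ`-contractions `g_j` and
`C`-Lipschitz potentials `φ_j` with `∑_j e^{φ_j(x)} < ∞`, if a bounded positive function `h`
satisfies `|h(x) − h(x′)| ≤ B·h(x)·d(x,x′)`, then the transfer operator
`Lh(x) = ∑_j e^{φ_j(x)} h(g_j(x))` satisfies
`|Lh(x) − Lh(x′)| ≤ e^{C·d(x,x′)}·(C + B·κ)·Lh(x)·d(x,x′)`. -/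
theorem lasota_yorke_scalar
    {Λ : Type*} [MetricSpace Λ] {J : Type*} [Countable J]
    (κ C : ℝ) (hκ0 : 0 ≤ κ) (hκ1 : κ < 1) (hC : 0 ≤ C)
    (g : J → Λ → Λ) (hg : ∀ j x x', dist (g j x) (g j x') ≤ κ * dist x x')
    (φ : J → Λ → ℝ) (hφ : ∀ j x x', |φ j x - φ j x'| ≤ C * dist x x')
    (hsum : ∀ x, Summable fun j => Real.exp (φ j x))
    (h : Λ → ℝ) (hpos : ∀ x, 0 < h x) (hbdd : ∃ M, ∀ x, h x ≤ M)
    (B : ℝ) (hB : 0 ≤ B)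
    (hLip : ∀ x x', |h x - h x'| ≤ B * h x * dist x x') :
    ∀ x x', |(∑' j, Real.exp (φ j x) * h (g j x)) - (∑' j, Real.exp (φ j x') * h (g j x'))|
      ≤ Real.exp (C * dist x x') * (C + B * κ) *
          (∑' j, Real.exp (φ j x) * h (g j x)) * dist x x' := by
  intro x x'
  obtain ⟨M, hM⟩ := hbdd
  set d := dist x x' with hd
  have hd0 : 0 ≤ d := dist_nonneg
  -- summability
  have hsA : ∀ y : Λ, Summable (fun j => Real.exp (φ j y) * h (g j y)) := by
    intro y
    apply Summable.of_nonneg_of_le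
      (fun j => mul_nonneg (Real.exp_pos _).le (hpos _).le)
      (fun j => ?_) ((hsum y).mul_right M)
    exact mul_le_mul_of_nonneg_left (hM _) (Real.exp_pos _).le
  have hA := hsA x
  have hB' := hsA x'
  -- termwise bound
  have key : ∀ j, |Real.exp (φ j x) * h (g j x) - Real.exp (φ j x') * h (g j x')|
      ≤ Real.exp (C * d) * (C + B * κ) * (Real.exp (φ j x) * h (g j x)) * d := by
    intro j
    set a := φ j x
    set a' := φ j x'
    set u := h (g j x)
    set u' := h (g j x')
    have hu : 0 < u := hpos _
    have hu' : 0 < u' := hpos _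
    have hφj : |a - a'| ≤ C * d := hφ j x x'
    have h1 : |Real.exp a - Real.exp a'| ≤ Real.exp a * (C * d * Real.exp (C * d)) := by
      refine le_trans (abs_exp_sub_exp_le a a') ?_
      apply mul_le_mul_of_nonneg_left _ (Real.exp_pos a).le
      exact mul_le_mul hφj (Real.exp_le_exp.2 hφj) (Real.exp_pos _).le (by positivity)
    have h2 : |u - u'| ≤ B * u * (κ * d) := by
      refine le_trans (hLip (g j x) (g j x')) ?_
      exact mul_le_mul_of_nonneg_left (hg j x x') (by positivity)
    have h3 : Real.exp a' ≤ Real.exp a * Real.exp (C * d) := by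
      rw [← Real.exp_add]
      apply Real.exp_le_exp.2
      have := abs_le.1 hφj
      linarith [this.1]
    have expand : Real.exp a * u - Real.exp a' * u'
        = (Real.exp a - Real.exp a') * u + Real.exp a' * (u - u') := by ring
    calc |Real.exp a * u - Real.exp a' * u'|
        ≤ |Real.exp a - Real.exp a'| * u + Real.exp a' * |u - u'| := by
          rw [expand]
          refine le_trans (abs_add_le _ _) ?_
          rw [abs_mul, abs_mul, abs_of_pos hu, abs_of_pos (Real.exp_pos a')]
      _ ≤ Real.exp a * (C * d * Real.exp (C * d)) * u
          + Real.exp a * Real.exp (C * d) * (B * u * (κ * d)) := by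
          exact add_le_add (mul_le_mul_of_nonneg_right h1 hu.le)
            (mul_le_mul h3 h2 (abs_nonneg _) (by positivity))
      _ = Real.exp (C * d) * (C + B * κ) * (Real.exp a * u) * d := by ring
  -- combine
  have hAB : Summable (fun j => Real.exp (φ j x) * h (g j x)
      - Real.exp (φ j x') * h (g j x')) := hA.sub hB'
  calc |(∑' j, Real.exp (φ j x) * h (g j x)) - ∑' j, Real.exp (φ j x') * h (g j x')|
      = |∑' j, (Real.exp (φ j x) * h (g j x) - Real.exp (φ j x') * h (g j x'))| := by
        rw [Summable.tsum_sub hA hB']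
    _ ≤ ∑' j, |Real.exp (φ j x) * h (g j x) - Real.exp (φ j x') * h (g j x')| := by
        simpa [Real.norm_eq_abs] using norm_tsum_le_tsum_norm
          (f := fun j => Real.exp (φ j x) * h (g j x) - Real.exp (φ j x') * h (g j x'))
          (by simpa [Real.norm_eq_abs] using hAB.abs)
    _ ≤ ∑' j, Real.exp (C * d) * (C + B * κ) * (Real.exp (φ j x) * h (g j x)) * d := by
        refine Summable.tsum_le_tsum key hAB.abs ?_
        simpa [mul_assoc, mul_comm, mul_left_comm] using
          (hA.mul_left (Real.exp (C * d) * (C + B * κ))).mul_right d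
    _ = Real.exp (C * d) * (C + B * κ) * (∑' j, Real.exp (φ j x) * h (g j x)) * d := by
        rw [tsum_mul_right, tsum_mul_left]
end

section
/- Let E be a complex Hilbert space, C′ ≥ 0, and for each j ∈ J let U_j : Λ → B(E) be a map whose values are unitary operators on E, with ‖U_j(x) − U_j(x′)‖_op ≤ C′·d(x, x′) for all x, x′ ∈ Λ. Let h : Λ → ℝ be a bounded positive function, B ≥ 0, and H : Λ → E a bounded map with ‖H(x) − H(x′)‖ ≤ B·h(x)·d(x, x′) for all x, x′ ∈ Λ. Define MH(x) = ∑_{j∈J} e^{φ_j(x)} U_j(x)(H(g_j(x))), L‖H‖(x) = ∑_{j∈J} e^{φ_j(x)} ‖H(g_j(x))‖, and Lh(x) = ∑_{j∈J} e^{φ_j(x)} h(g_j(x)). Then for all x, x′ ∈ Λ: ‖MH(x) − MH(x′)‖ ≤ e^{C·d(x,x′)}·((C + C′)·L‖H‖(x) + B·κ·Lh(x))·d(x, x′). -/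
open scoped InnerProductSpace

lemma aux_unitary_norm {E : Type*} [NormedAddCommGroup E] [InnerProductSpace ℂ E]
    [CompleteSpace E] {A : E →L[ℂ] E} (hA : A ∈ unitary (E →L[ℂ] E)) (v : E) :
    ‖A v‖ = ‖v‖ := by
  have h1 : (ContinuousLinearMap.adjoint A) (A v) = v := by
    have h := hA.1
    rw [ContinuousLinearMap.star_eq_adjoint] at h
    calc (ContinuousLinearMap.adjoint A) (A v)
        = ((ContinuousLinearMap.adjoint A) * A) v := rfl
      _ = v := by rw [h]; rfl
  have h2 : (⟪A v, A v⟫_ℂ) = ⟪v, v⟫_ℂ := by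
    rw [← ContinuousLinearMap.adjoint_inner_left, h1]
  have h3 : ‖A v‖ ^ 2 = ‖v‖ ^ 2 := by
    rw [← @inner_self_eq_norm_sq ℂ, ← @inner_self_eq_norm_sq ℂ, h2]
  nlinarith [norm_nonneg v, norm_nonneg (A v)]

lemma aux_one_sub_exp (s : ℝ) : |1 - Real.exp s| ≤ Real.exp |s| - 1 := by
  have h1 : s + 1 ≤ Real.exp s := Real.add_one_le_exp s
  have h2 : (-s) + 1 ≤ Real.exp (-s) := Real.add_one_le_exp (-s)
  rcases le_or_gt 0 s with hs | hs
  · rw [abs_of_nonneg hs, abs_sub_comm, abs_of_nonneg (by linarith)]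
  · rw [abs_of_neg hs, abs_of_nonneg (by linarith [(Real.exp_lt_one_iff.mpr hs).le])]
    linarith

lemma aux_exp_sub_one (t : ℝ) : Real.exp t - 1 ≤ t * Real.exp t := by
  have h : (-t) + 1 ≤ Real.exp (-t) := Real.add_one_le_exp (-t)
  have := Real.exp_pos t
  have hmul : (1 - t) * Real.exp t ≤ Real.exp (-t) * Real.exp t := by nlinarith
  rw [← Real.exp_add] at hmul
  simp at hmul
  nlinarith

/-- **Vector-valued Lasota–Yorke estimate with unitary cocycle.** For a countable family of
`κ`-contractions `g_j`, `C`-Lipschitz potentials `φ_j` with `∑_j e^{φ_j(x)} < ∞`, and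
`C′`-Lipschitz families of unitary operators `U_j` on a complex Hilbert space `E`, if
`‖H(x) − H(x′)‖ ≤ B·h(x)·d(x,x′)` with `h` bounded positive and `H` bounded, then the twisted
transfer operator `MH(x) = ∑_j e^{φ_j(x)} U_j(x)(H(g_j(x)))` satisfies
`‖MH(x) − MH(x′)‖ ≤ e^{C·d(x,x′)}·((C + C′)·L‖H‖(x) + B·κ·Lh(x))·d(x,x′)`. -/
theorem lasota_yorke_vector
    {Λ : Type*} [MetricSpace Λ] {J : Type*} [Countable J]
    {E : Type*} [NormedAddCommGroup E] [InnerProductSpace ℂ E] [CompleteSpace E]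
    (κ C C' : ℝ) (hκ0 : 0 ≤ κ) (hκ1 : κ < 1) (hC : 0 ≤ C) (hC' : 0 ≤ C')
    (g : J → Λ → Λ) (hg : ∀ j x x', dist (g j x) (g j x') ≤ κ * dist x x')
    (φ : J → Λ → ℝ) (hφ : ∀ j x x', |φ j x - φ j x'| ≤ C * dist x x')
    (hsum : ∀ x, Summable fun j => Real.exp (φ j x))
    (U : J → Λ → E →L[ℂ] E)
    (hunit : ∀ j x, U j x ∈ unitary (E →L[ℂ] E))
    (hULip : ∀ j x x', ‖U j x - U j x'‖ ≤ C' * dist x x')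
    (h : Λ → ℝ) (hpos : ∀ x, 0 < h x) (hhbdd : ∃ M, ∀ x, h x ≤ M)
    (B : ℝ) (hB : 0 ≤ B)
    (H : Λ → E) (hHbdd : ∃ M, ∀ x, ‖H x‖ ≤ M)
    (hHLip : ∀ x x', ‖H x - H x'‖ ≤ B * h x * dist x x') :
    ∀ x x',
      ‖(∑' j, Real.exp (φ j x) • (U j x (H (g j x)))) -
        (∑' j, Real.exp (φ j x') • (U j x' (H (g j x'))))‖
      ≤ Real.exp (C * dist x x') *
          ((C + C') * (∑' j, Real.exp (φ j x) * ‖H (g j x)‖) +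
            B * κ * (∑' j, Real.exp (φ j x) * h (g j x))) * dist x x' := by
  intro x x'
  obtain ⟨M, hM⟩ := hHbdd
  obtain ⟨Mh, hMh⟩ := hhbdd
  set d := dist x x' with hd_def
  have hd : 0 ≤ d := dist_nonneg
  set e := Real.exp (C * d) with he_def
  have he : 0 < e := Real.exp_pos _
  -- summability facts
  have SVnorm : ∀ y : Λ, ∀ j : J,
      ‖Real.exp (φ j y) • U j y (H (g j y))‖ ≤ Real.exp (φ j y) * M := by
    intro y j
    rw [norm_smul, Real.norm_eq_abs, abs_of_pos (Real.exp_pos _),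
      aux_unitary_norm (hunit j y)]
    exact mul_le_mul_of_nonneg_left (hM _) (Real.exp_pos _).le
  have SV : ∀ y : Λ, Summable fun j => Real.exp (φ j y) • U j y (H (g j y)) := fun y =>
    Summable.of_norm_bounded ((hsum y).mul_right M) (SVnorm y)
  have S1 : Summable fun j => Real.exp (φ j x) * ‖H (g j x)‖ :=
    Summable.of_nonneg_of_le (fun j => mul_nonneg (Real.exp_pos _).le (norm_nonneg _))
      (fun j => mul_le_mul_of_nonneg_left (hM _) (Real.exp_pos _).le) ((hsum x).mul_right M)
  have Sh : Summable fun j => Real.exp (φ j x) * h (g j x) :=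
    Summable.of_nonneg_of_le (fun j => mul_nonneg (Real.exp_pos _).le (hpos _).le)
      (fun j => mul_le_mul_of_nonneg_left (hMh _) (Real.exp_pos _).le) ((hsum x).mul_right Mh)
  -- the per-term bound
  have key : ∀ j : J,
      ‖Real.exp (φ j x) • U j x (H (g j x)) - Real.exp (φ j x') • U j x' (H (g j x'))‖
      ≤ e * ((C + C') * (Real.exp (φ j x) * ‖H (g j x)‖)
          + B * κ * (Real.exp (φ j x) * h (g j x))) * d := by
    intro j
    set a := Real.exp (φ j x) with ha_def
    set a' := Real.exp (φ j x') with ha'_def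
    have ha : 0 < a := Real.exp_pos _
    have habs : |φ j x' - φ j x| ≤ C * d := by rw [abs_sub_comm]; exact hφ j x x'
    have ha'eq : a' = a * Real.exp (φ j x' - φ j x) := by
      rw [ha_def, ha'_def, ← Real.exp_add]; ring_nf
    have ha'le : a' ≤ a * e := by
      rw [ha'eq]
      exact mul_le_mul_of_nonneg_left
        (Real.exp_le_exp.mpr (le_trans (le_abs_self _) habs)) ha.le
    have hab : |a - a'| ≤ a * (C * d * e) := by
      have h1 : |a - a'| = a * |1 - Real.exp (φ j x' - φ j x)| := by
        rw [ha'eq, ← mul_one_sub, abs_mul, abs_of_pos ha]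
      have h2 : |1 - Real.exp (φ j x' - φ j x)| ≤ e - 1 := by
        refine le_trans (aux_one_sub_exp _) ?_
        have := Real.exp_le_exp.mpr habs
        linarith
      have h3 : e - 1 ≤ C * d * e := aux_exp_sub_one (C * d)
      calc |a - a'| = a * |1 - Real.exp (φ j x' - φ j x)| := h1
        _ ≤ a * (C * d * e) := mul_le_mul_of_nonneg_left (le_trans h2 h3) ha.le
    set Hx := H (g j x) with hHx
    set Hx' := H (g j x') with hHx'
    have decomp : a • U j x Hx - a' • U j x' Hx'
        = (a - a') • U j x Hx + a' • ((U j x - U j x') Hx)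
          + a' • (U j x' (Hx - Hx')) := by
      simp only [ContinuousLinearMap.sub_apply, map_sub, smul_sub, sub_smul]
      abel
    rw [decomp]
    have hT1 : ‖(a - a') • U j x Hx‖ ≤ a * (C * d * e) * ‖Hx‖ := by
      rw [norm_smul, Real.norm_eq_abs, aux_unitary_norm (hunit j x)]
      exact mul_le_mul_of_nonneg_right hab (norm_nonneg _)
    have hT2 : ‖a' • ((U j x - U j x') Hx)‖ ≤ a * e * (C' * d * ‖Hx‖) := by
      rw [norm_smul, Real.norm_eq_abs, abs_of_pos (Real.exp_pos _)]
      have hop : ‖(U j x - U j x') Hx‖ ≤ C' * d * ‖Hx‖ :=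
        le_trans (ContinuousLinearMap.le_opNorm _ _)
          (mul_le_mul_of_nonneg_right (hULip j x x') (norm_nonneg _))
      exact mul_le_mul ha'le hop (norm_nonneg _) (mul_nonneg ha.le he.le)
    have hT3 : ‖a' • (U j x' (Hx - Hx'))‖ ≤ a * e * (B * h (g j x) * (κ * d)) := by
      rw [norm_smul, Real.norm_eq_abs, abs_of_pos (Real.exp_pos _),
        aux_unitary_norm (hunit j x')]
      have hΔ : ‖Hx - Hx'‖ ≤ B * h (g j x) * (κ * d) :=
        le_trans (hHLip (g j x) (g j x'))
          (mul_le_mul_of_nonneg_left (hg j x x') (mul_nonneg hB (hpos _).le))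
      exact mul_le_mul ha'le hΔ (norm_nonneg _) (mul_nonneg ha.le he.le)
    calc ‖(a - a') • U j x Hx + a' • ((U j x - U j x') Hx) + a' • (U j x' (Hx - Hx'))‖
        ≤ ‖(a - a') • U j x Hx‖ + ‖a' • ((U j x - U j x') Hx)‖
          + ‖a' • (U j x' (Hx - Hx'))‖ := norm_add₃_le
      _ ≤ a * (C * d * e) * ‖Hx‖ + a * e * (C' * d * ‖Hx‖)
          + a * e * (B * h (g j x) * (κ * d)) := by linarith
      _ = e * ((C + C') * (a * ‖Hx‖) + B * κ * (a * h (g j x))) * d := by ring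
  -- summability of the bound
  have Sb : Summable fun j => e * ((C + C') * (Real.exp (φ j x) * ‖H (g j x)‖)
      + B * κ * (Real.exp (φ j x) * h (g j x))) * d :=
    (((S1.mul_left (C + C')).add (Sh.mul_left (B * κ))).mul_left e).mul_right d
  have Snd : Summable fun j =>
      ‖Real.exp (φ j x) • U j x (H (g j x)) - Real.exp (φ j x') • U j x' (H (g j x'))‖ :=
    Summable.of_nonneg_of_le (fun j => norm_nonneg _) key Sb
  calc ‖(∑' j, Real.exp (φ j x) • (U j x (H (g j x)))) -
        (∑' j, Real.exp (φ j x') • (U j x' (H (g j x'))))‖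
      = ‖∑' j, (Real.exp (φ j x) • U j x (H (g j x))
          - Real.exp (φ j x') • U j x' (H (g j x')))‖ := by
        rw [Summable.tsum_sub (SV x) (SV x')]
    _ ≤ ∑' j, ‖Real.exp (φ j x) • U j x (H (g j x))
          - Real.exp (φ j x') • U j x' (H (g j x'))‖ := norm_tsum_le_tsum_norm Snd
    _ ≤ ∑' j, e * ((C + C') * (Real.exp (φ j x) * ‖H (g j x)‖)
          + B * κ * (Real.exp (φ j x) * h (g j x))) * d := Summable.tsum_le_tsum key Snd Sb
    _ = ∑' j, (e * d) * ((C + C') * (Real.exp (φ j x) * ‖H (g j x)‖)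
          + B * κ * (Real.exp (φ j x) * h (g j x))) := tsum_congr fun j => by ring
    _ = (e * d) * ∑' j, ((C + C') * (Real.exp (φ j x) * ‖H (g j x)‖)
          + B * κ * (Real.exp (φ j x) * h (g j x))) := tsum_mul_left
    _ = (e * d) * ((C + C') * (∑' j, Real.exp (φ j x) * ‖H (g j x)‖)
          + B * κ * (∑' j, Real.exp (φ j x) * h (g j x))) := by
        rw [Summable.tsum_add (S1.mul_left _) (Sh.mul_left _), tsum_mul_left, tsum_mul_left]
    _ = e * ((C + C') * (∑' j, Real.exp (φ j x) * ‖H (g j x)‖)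
          + B * κ * (∑' j, Real.exp (φ j x) * h (g j x))) * d := by ring
end

section
/- Let (S, d) be a metric space of diameter at most r > 0, E a normed vector space, and K ≥ 0 a constant with K·r ≤ 1/8. Let h : S → (0, ∞) and H : S → E satisfy, for all x, x′ ∈ S: |h(x) − h(x′)| ≤ K·h(x)·d(x, x′), ‖H(x) − H(x′)‖ ≤ K·h(x)·d(x, x′), and ‖H(x)‖ ≤ h(x). Then: (1) 1/2 ≤ h(x)/h(x′) ≤ 2 for all x, x′ ∈ S; and (2) either ‖H(x)‖ ≤ (3/4)·h(x) for all x ∈ S, or ‖H(x)‖ ≥ (1/4)·h(x) for all x ∈ S. -/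
/-- **Trapping dichotomy.** On a metric space of diameter at most `r`, if `h > 0` and `H`
satisfy the Lipschitz bounds `|h(x) − h(x′)| ≤ K·h(x)·d(x,x′)`,
`‖H(x) − H(x′)‖ ≤ K·h(x)·d(x,x′)`, `‖H‖ ≤ h`, and `K·r ≤ 1/8`, then the ratio `h(x)/h(x′)`
lies in `[1/2, 2]`, and either `‖H‖ ≤ (3/4)h` everywhere or `‖H‖ ≥ (1/4)h` everywhere. -/
theorem trapping_dichotomy
    {S : Type*} [MetricSpace S] {E : Type*} [NormedAddCommGroup E] [NormedSpace ℝ E]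
    (r K : ℝ) (hr : 0 < r) (hK : 0 ≤ K)
    (hdiam : ∀ x x' : S, dist x x' ≤ r) (hKr : K * r ≤ 1 / 8)
    (h : S → ℝ) (hpos : ∀ x, 0 < h x) (H : S → E)
    (hh : ∀ x x', |h x - h x'| ≤ K * h x * dist x x')
    (hH : ∀ x x', ‖H x - H x'‖ ≤ K * h x * dist x x')
    (hHh : ∀ x, ‖H x‖ ≤ h x) :
    (∀ x x', 1 / 2 ≤ h x / h x' ∧ h x / h x' ≤ 2) ∧
      ((∀ x, ‖H x‖ ≤ 3 / 4 * h x) ∨ (∀ x, 1 / 4 * h x ≤ ‖H x‖)) := by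
  have hbnd : ∀ x x' : S, K * h x * dist x x' ≤ 1 / 8 * h x := by
    intro x x'
    have hd := hdiam x x'
    have h1 : K * dist x x' ≤ K * r := by nlinarith
    nlinarith [(hpos x).le, dist_nonneg (x := x) (y := x')]
  have key : ∀ x x' : S, 7 / 8 * h x ≤ h x' ∧ h x' ≤ 9 / 8 * h x := by
    intro x x'
    have h2 := abs_le.1 (le_trans (hh x x') (hbnd x x'))
    constructor <;> linarith [h2.1, h2.2]
  constructor
  · intro x x'
    have k1 := (key x x').1
    have k2 := (key x x').2
    have hx' := hpos x'
    constructor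
    · rw [le_div_iff₀ hx']
      nlinarith [(hpos x).le]
    · rw [div_le_iff₀ hx']
      linarith
  · by_cases hc : ∀ x, ‖H x‖ ≤ 3 / 4 * h x
    · exact Or.inl hc
    · right
      push_neg at hc
      obtain ⟨x0, hx0⟩ := hc
      intro x
      have h1 : ‖H x0‖ - ‖H x‖ ≤ ‖H x0 - H x‖ := norm_sub_norm_le _ _
      have h2 := le_trans (hH x0 x) (hbnd x0 x)
      have h3 := (key x0 x).2
      linarith [hpos x0]
end

section
/- Let (Λ, 𝒜, ν) be a probability space, W a countable set, and for each w ∈ W let γ_w : Λ → Λ be a measurable map and p_w : Λ → [0, ∞) a measurable function with ∑_{w∈W} p_w(x) = 1 for every x ∈ Λ. Define, for bounded nonnegative measurable f : Λ → ℝ, the operator Lf(x) = ∑_{w∈W} p_w(x)·f(γ_w(x)), and assume ∫_Λ Lf dν = ∫_Λ f dν for every bounded nonnegative measurable f. Let S : Λ → Λ be measurable with S(γ_w(x)) = x for all w ∈ W and x ∈ Λ. Let η ∈ (0,1), ζ ≥ 1, κ ∈ (0,1), let (h_n)_{n≥0} be bounded nonnegative measurable functions on Λ and (Ω_n)_{n≥1}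 measurable subsets of Λ such that for every n ≥ 1: h_n(x)² ≤ η·L(h_{n−1}²)(x) for all x ∈ Ω_n, h_n(x)² ≤ ζ·L(h_{n−1}²)(x) for all x ∈ Λ ∖ Ω_n, and ν({x ∈ Λ : #{j : 1 ≤ j ≤ n, S^j(x) ∈ Ω_j} < κ·n}) < 2·e^{−κ·n}. Then for every n ≥ 1: ∫_Λ h_n² dν ≤ ζⁿ·(η^{κn} + 2·e^{−κn})·(sup_{x∈Λ} h₀(x))². -/
open MeasureTheory

section DolgAux

variable {Λ : Type*} [MeasurableSpace Λ] {W : Type*} [Countable W]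

/-- The transfer operator `Lf(x) = ∑_w p_w(x)·f(γ_w(x))`. -/
noncomputable def dolgLop (p : W → Λ → ℝ) (γ : W → Λ → Λ) (f : Λ → ℝ) (x : Λ) : ℝ :=
  ∑' w, p w x * f (γ w x)

/-- A function is *nice* if it is measurable, nonnegative and bounded above. -/
def dolgNice (f : Λ → ℝ) : Prop :=
  Measurable f ∧ (∀ x, 0 ≤ f x) ∧ ∃ C, ∀ x, f x ≤ C

open scoped Classical in
/-- The weight `∏_{j=1}^n c_j(T^j y)` where `c_j = η` on `Ω_j` and `ζ` elsewhere. -/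
noncomputable def dolgW {Λ : Type*} (η ζ : ℝ) (T : Λ → Λ) (Ω : ℕ → Set Λ) (n : ℕ) (y : Λ) : ℝ :=
  ∏ j ∈ Finset.Icc 1 n, (if T^[j] y ∈ Ω j then η else ζ)

variable {p : W → Λ → ℝ} {γ : W → Λ → Λ}

lemma dolg_psummable (hp1 : ∀ x, ∑' w, p w x = 1) (x : Λ) :
    Summable fun w => p w x := by
  by_contra hs
  have h1 := hp1 x
  rw [tsum_eq_zero_of_not_summable hs] at h1
  norm_num at h1

lemma dolg_summable (hp0 : ∀ w x, 0 ≤ p w x) (hp1 : ∀ x, ∑' w, p w x = 1) (x : Λ)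
    {f : Λ → ℝ} {C : ℝ} (hf0 : ∀ y, 0 ≤ f y) (hfC : ∀ y, f y ≤ C) :
    Summable fun w => p w x * f (γ w x) :=
  Summable.of_nonneg_of_le (fun w => mul_nonneg (hp0 w x) (hf0 _))
    (fun w => mul_le_mul_of_nonneg_left (hfC _) (hp0 w x))
    ((dolg_psummable hp1 x).mul_right C)

lemma dolgNice.lop (hγ : ∀ w, Measurable (γ w)) (hp : ∀ w, Measurable (p w))
    (hp0 : ∀ w x, 0 ≤ p w x) (hp1 : ∀ x, ∑' w, p w x = 1)
    {f : Λ → ℝ} (hf : dolgNice f) : dolgNice (dolgLop p γ f) := by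
  obtain ⟨hm, h0, C, hC⟩ := hf
  refine ⟨?_, fun x => tsum_nonneg fun w => mul_nonneg (hp0 w x) (h0 _), C, fun x => ?_⟩
  · have key : dolgLop p γ f = fun x => (∑' w, ENNReal.ofReal (p w x * f (γ w x))).toReal := by
      funext x
      rw [← ENNReal.ofReal_tsum_of_nonneg (fun w => mul_nonneg (hp0 w x) (h0 _))
        (dolg_summable hp0 hp1 x h0 hC),
        ENNReal.toReal_ofReal (tsum_nonneg fun w => mul_nonneg (hp0 w x) (h0 _))]
      rfl
    rw [key]
    exact (Measurable.ennreal_tsum fun w =>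
      ((hp w).mul (hm.comp (hγ w))).ennreal_ofReal).ennreal_toReal
  · calc dolgLop p γ f x ≤ ∑' w, p w x * C :=
          Summable.tsum_le_tsum (fun w => mul_le_mul_of_nonneg_left (hC _) (hp0 w x))
            (dolg_summable hp0 hp1 x h0 hC) ((dolg_psummable hp1 x).mul_right C)
      _ = C := by rw [tsum_mul_right, hp1 x, one_mul]

lemma dolgLop_mono (hp0 : ∀ w x, 0 ≤ p w x) (hp1 : ∀ x, ∑' w, p w x = 1)
    {f g : Λ → ℝ} (hf0 : ∀ y, 0 ≤ f y) {C : ℝ} (hgC : ∀ y, g y ≤ C)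
    (hfg : ∀ y, f y ≤ g y) (x : Λ) :
    dolgLop p γ f x ≤ dolgLop p γ g x :=
  Summable.tsum_le_tsum (fun w => mul_le_mul_of_nonneg_left (hfg _) (hp0 w x))
    (dolg_summable hp0 hp1 x hf0 (fun y => (hfg y).trans (hgC y)))
    (dolg_summable hp0 hp1 x (fun y => (hf0 y).trans (hfg y)) hgC)

lemma dolg_pull {T : Λ → Λ} (hTγ : ∀ w x, T (γ w x) = x) :
    ∀ (k : ℕ) (φ g : Λ → ℝ) (x : Λ),
      (dolgLop p γ)^[k] (fun y => φ (T^[k] y) * g y) x = φ x * (dolgLop p γ)^[k] g x := by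
  intro k
  induction k with
  | zero => intro φ g x; simp
  | succ k ih =>
    intro φ g x
    have h1 : dolgLop p γ (fun y => φ (T^[k + 1] y) * g y)
        = fun z => φ (T^[k] z) * dolgLop p γ g z := by
      funext z
      unfold dolgLop
      rw [← tsum_mul_left]
      refine tsum_congr fun w => ?_
      simp only [Function.iterate_succ_apply, hTγ]
      ring
    rw [Function.iterate_succ_apply, h1, ih, Function.iterate_succ_apply]

lemma dolgNice.iter (hγ : ∀ w, Measurable (γ w)) (hp : ∀ w, Measurable (p w))
    (hp0 : ∀ w x, 0 ≤ p w x) (hp1 : ∀ x, ∑' w, p w x = 1)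
    {f : Λ → ℝ} (hf : dolgNice f) : ∀ k, dolgNice ((dolgLop p γ)^[k] f)
  | 0 => hf
  | (k + 1) => by
    rw [Function.iterate_succ_apply']
    exact (dolgNice.iter hγ hp hp0 hp1 hf k).lop hγ hp hp0 hp1

lemma dolgNice.integrable {ν : Measure Λ} [IsFiniteMeasure ν] {f : Λ → ℝ}
    (hf : dolgNice f) : Integrable f ν := by
  obtain ⟨hm, h0, C, hC⟩ := hf
  exact (integrable_const C).mono' hm.aestronglyMeasurable
    (ae_of_all _ fun x => by rw [Real.norm_eq_abs, abs_of_nonneg (h0 x)]; exact hC x)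

lemma dolg_integral_iter (ν : Measure Λ)
    (hγ : ∀ w, Measurable (γ w)) (hp : ∀ w, Measurable (p w))
    (hp0 : ∀ w x, 0 ≤ p w x) (hp1 : ∀ x, ∑' w, p w x = 1)
    (hstat : ∀ f : Λ → ℝ, Measurable f → (∀ x, 0 ≤ f x) → (∃ M, ∀ x, f x ≤ M) →
      ∫ x, (∑' w, p w x * f (γ w x)) ∂ν = ∫ x, f x ∂ν)
    {f : Λ → ℝ} (hf : dolgNice f) :
    ∀ k, ∫ x, (dolgLop p γ)^[k] f x ∂ν = ∫ x, f x ∂ν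
  | 0 => rfl
  | (k + 1) => by
    obtain ⟨hm, h0, hC⟩ := hf.iter hγ hp hp0 hp1 k
    calc ∫ x, (dolgLop p γ)^[k + 1] f x ∂ν
        = ∫ x, dolgLop p γ ((dolgLop p γ)^[k] f) x ∂ν := by
          simp only [Function.iterate_succ_apply']
      _ = ∫ x, (dolgLop p γ)^[k] f x ∂ν := hstat _ hm h0 hC
      _ = ∫ x, f x ∂ν := dolg_integral_iter ν hγ hp hp0 hp1 hstat hf k

end DolgAux

/-- **L² spectral bound from the Dolgopyat-type properties.** Let `L` be a normalized
countable-branch transfer operator `Lf(x) = ∑_w p_w(x)·f(γ_w(x))` whose branches `γ_w` are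
right inverses of the expanding map `T`, and let `ν` be an `L`-stationary probability
measure. If functions `h_n` satisfy the contraction `h_n² ≤ η·L(h_{n−1}²)` on sets `Ω_n`
and only `h_n² ≤ ζ·L(h_{n−1}²)` elsewhere, and the sets `Ω_n` satisfy a large deviation
property along `T`, then `∫ h_n² dν ≤ ζⁿ·(η^{κn} + 2e^{−κn})·(sup h₀)²`. -/
theorem l2_bound_from_dolgopyat_method
    {Λ : Type*} [MeasurableSpace Λ] (ν : Measure Λ) [IsProbabilityMeasure ν]
    {W : Type*} [Countable W]
    (γ : W → Λ → Λ) (hγ : ∀ w, Measurable (γ w))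
    (p : W → Λ → ℝ) (hp : ∀ w, Measurable (p w)) (hp0 : ∀ w x, 0 ≤ p w x)
    (hp1 : ∀ x, ∑' w, p w x = 1)
    (hstat : ∀ f : Λ → ℝ, Measurable f → (∀ x, 0 ≤ f x) → (∃ M, ∀ x, f x ≤ M) →
      ∫ x, (∑' w, p w x * f (γ w x)) ∂ν = ∫ x, f x ∂ν)
    (T : Λ → Λ) (hT : Measurable T) (hTγ : ∀ w x, T (γ w x) = x)
    (η ζ κ : ℝ) (hη0 : 0 < η) (hη1 : η < 1) (hζ : 1 ≤ ζ) (hκ0 : 0 < κ) (hκ1 : κ < 1)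
    (h : ℕ → Λ → ℝ) (hmeas : ∀ n, Measurable (h n)) (hnn : ∀ n x, 0 ≤ h n x)
    (hbdd : ∀ n, ∃ M, ∀ x, h n x ≤ M)
    (Ω : ℕ → Set Λ) (hΩ : ∀ n, MeasurableSet (Ω n))
    (hcontr : ∀ n, 1 ≤ n → ∀ x ∈ Ω n,
      (h n x) ^ 2 ≤ η * ∑' w, p w x * (h (n - 1) (γ w x)) ^ 2)
    (htriv : ∀ n, 1 ≤ n → ∀ x ∉ Ω n,
      (h n x) ^ 2 ≤ ζ * ∑' w, p w x * (h (n - 1) (γ w x)) ^ 2)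
    (hldp : ∀ n : ℕ, 1 ≤ n →
      ν {x | (({j | 1 ≤ j ∧ j ≤ n ∧ T^[j] x ∈ Ω j} : Set ℕ).ncard : ℝ) < κ * n}
        < ENNReal.ofReal (2 * Real.exp (-(κ * n)))) :
    ∀ n : ℕ, 1 ≤ n →
      ∫ x, (h n x) ^ 2 ∂ν
        ≤ ζ ^ n * (η ^ (κ * (n : ℝ)) + 2 * Real.exp (-(κ * n))) * (⨆ x, h 0 x) ^ 2 := by
  classical
  have hζ0 : (0 : ℝ) < ζ := lt_of_lt_of_le one_pos hζ
  have hηζ : η ≤ ζ := hη1.le.trans hζ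
  -- Λ is nonempty since ν is a probability measure
  have hΛ : Nonempty Λ := by
    by_contra hne
    rw [not_nonempty_iff] at hne
    have h1 : ν Set.univ = 1 := measure_univ
    rw [Set.univ_eq_empty_iff.mpr hne] at h1
    simp at h1
  -- the sup of h 0
  set M : ℝ := ⨆ x, h 0 x with hMdef
  obtain ⟨C0, hC0⟩ := hbdd 0
  have hM : ∀ x, h 0 x ≤ M :=
    fun x => le_ciSup ⟨C0, by rintro y ⟨z, rfl⟩; exact hC0 z⟩ x
  have hM0 : 0 ≤ M := (hnn 0 hΛ.some).trans (hM hΛ.some)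
  -- basic facts about the weight dolgW
  have hWnn : ∀ (m : ℕ) (y : Λ), 0 ≤ dolgW η ζ T Ω m y := by
    intro m y
    refine Finset.prod_nonneg fun j _ => ?_
    split <;> positivity
  have hWle : ∀ (m : ℕ) (y : Λ), dolgW η ζ T Ω m y ≤ ζ ^ m := by
    intro m y
    calc dolgW η ζ T Ω m y ≤ ∏ j ∈ Finset.Icc 1 m, ζ := by
          refine Finset.prod_le_prod (fun j _ => ?_) (fun j _ => ?_)
          · split <;> positivity
          · split <;> linarith
      _ = ζ ^ m := by rw [Finset.prod_const, Nat.card_Icc]; simp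
  have hWmeas : ∀ m : ℕ, Measurable (dolgW η ζ T Ω m) := by
    intro m
    refine Finset.measurable_prod _ fun j _ => ?_
    exact Measurable.ite ((hT.iterate j) (hΩ j)) measurable_const measurable_const
  -- niceness of h m ^ 2 and of G m
  have niceH2 : ∀ m : ℕ, dolgNice (fun z => h m z ^ 2) := by
    intro m
    obtain ⟨Cm, hCm⟩ := hbdd m
    exact ⟨(hmeas m).pow_const 2, fun z => sq_nonneg _, Cm ^ 2,
      fun z => pow_le_pow_left₀ (hnn m z) (hCm z) 2⟩
  have niceG : ∀ m : ℕ, dolgNice (fun y => dolgW η ζ T Ω m y * h 0 y ^ 2) := by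
    intro m
    refine ⟨(hWmeas m).mul ((hmeas 0).pow_const 2),
      fun y => mul_nonneg (hWnn m y) (sq_nonneg _), ζ ^ m * M ^ 2, fun y => ?_⟩
    have h2 : h 0 y ^ 2 ≤ M ^ 2 := pow_le_pow_left₀ (hnn 0 y) (hM y) 2
    exact mul_le_mul (hWle m y) h2 (sq_nonneg _) (by positivity)
  -- the key pointwise claim
  have claim : ∀ (m : ℕ) (x : Λ),
      h m x ^ 2 ≤ (dolgLop p γ)^[m] (fun y => dolgW η ζ T Ω m y * h 0 y ^ 2) x := by
    intro m
    induction m with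
    | zero =>
      intro x
      simp [dolgW, Finset.Icc_eq_empty_of_lt (by norm_num : (0:ℕ) < 1)]
    | succ m ih =>
      intro x
      obtain ⟨_, hI0, CI, hIC⟩ := (niceG m).iter hγ hp hp0 hp1 m
      obtain ⟨_, h20, C2, h2C⟩ := niceH2 m
      have hcx : (0 : ℝ) ≤ if x ∈ Ω (m + 1) then η else ζ := by split <;> positivity
      have step1 : h (m + 1) x ^ 2
          ≤ (if x ∈ Ω (m + 1) then η else ζ) * dolgLop p γ (fun z => h m z ^ 2) x := by
        by_cases hx : x ∈ Ω (m + 1)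
        · simpa [hx, dolgLop] using hcontr (m + 1) (by omega) x hx
        · simpa [hx, dolgLop] using htriv (m + 1) (by omega) x hx
      have step2 : dolgLop p γ (fun z => h m z ^ 2) x
          ≤ dolgLop p γ ((dolgLop p γ)^[m] (fun y => dolgW η ζ T Ω m y * h 0 y ^ 2)) x :=
        dolgLop_mono hp0 hp1 h20 hIC ih x
      calc h (m + 1) x ^ 2
          ≤ (if x ∈ Ω (m + 1) then η else ζ) * dolgLop p γ (fun z => h m z ^ 2) x := step1
        _ ≤ (if x ∈ Ω (m + 1) then η else ζ) *
              dolgLop p γ ((dolgLop p γ)^[m] (fun y => dolgW η ζ T Ω m y * h 0 y ^ 2)) x :=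
            mul_le_mul_of_nonneg_left step2 hcx
        _ = (if x ∈ Ω (m + 1) then η else ζ) *
              (dolgLop p γ)^[m + 1] (fun y => dolgW η ζ T Ω m y * h 0 y ^ 2) x := by
            rw [Function.iterate_succ_apply']
        _ = (dolgLop p γ)^[m + 1]
              (fun y => (if T^[m + 1] y ∈ Ω (m + 1) then η else ζ) *
                (dolgW η ζ T Ω m y * h 0 y ^ 2)) x :=
            (dolg_pull hTγ (m + 1) (fun z => if z ∈ Ω (m + 1) then η else ζ)
              (fun y => dolgW η ζ T Ω m y * h 0 y ^ 2) x).symm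
        _ = (dolgLop p γ)^[m + 1] (fun y => dolgW η ζ T Ω (m + 1) y * h 0 y ^ 2) x := by
            have hfun : (fun y => (if T^[m + 1] y ∈ Ω (m + 1) then η else ζ) *
                (dolgW η ζ T Ω m y * h 0 y ^ 2))
                = fun y => dolgW η ζ T Ω (m + 1) y * h 0 y ^ 2 := by
              funext y
              unfold dolgW
              rw [Finset.prod_Icc_succ_top (by omega : 1 ≤ m + 1)]
              ring
            rw [hfun]
  -- now the integral estimates
  intro n hn
  have hint1 : ∫ x, h n x ^ 2 ∂ν
      ≤ ∫ x, (dolgLop p γ)^[n] (fun y => dolgW η ζ T Ω n y * h 0 y ^ 2) x ∂ν :=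
    integral_mono ((niceH2 n).integrable) (((niceG n).iter hγ hp hp0 hp1 n).integrable)
      (claim n)
  have hint2 : ∫ x, (dolgLop p γ)^[n] (fun y => dolgW η ζ T Ω n y * h 0 y ^ 2) x ∂ν
      = ∫ x, dolgW η ζ T Ω n x * h 0 x ^ 2 ∂ν :=
    dolg_integral_iter ν hγ hp hp0 hp1 hstat (niceG n) n
  have hWint : Integrable (dolgW η ζ T Ω n) ν :=
    dolgNice.integrable ⟨hWmeas n, hWnn n, ζ ^ n, hWle n⟩
  have hint3 : ∫ x, dolgW η ζ T Ω n x * h 0 x ^ 2 ∂ν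
      ≤ ∫ x, M ^ 2 * dolgW η ζ T Ω n x ∂ν := by
    refine integral_mono ((niceG n).integrable) (hWint.const_mul (M ^ 2)) fun y => ?_
    calc dolgW η ζ T Ω n y * h 0 y ^ 2
        ≤ dolgW η ζ T Ω n y * M ^ 2 :=
          mul_le_mul_of_nonneg_left (pow_le_pow_left₀ (hnn 0 y) (hM y) 2) (hWnn n y)
      _ = M ^ 2 * dolgW η ζ T Ω n y := mul_comm _ _
  have hint4 : ∫ x, M ^ 2 * dolgW η ζ T Ω n x ∂ν = M ^ 2 * ∫ x, dolgW η ζ T Ω n x ∂ν :=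
    integral_const_mul _ _
  -- the bad set B
  set Nf : Λ → ℝ :=
    fun x => (((Finset.Icc 1 n).filter fun j => T^[j] x ∈ Ω j).card : ℝ) with hNf
  have hNfmeas : Measurable Nf := by
    have hEq : Nf = fun x => ∑ j ∈ Finset.Icc 1 n, if T^[j] x ∈ Ω j then (1 : ℝ) else 0 := by
      funext x
      simp only [hNf]
      rw [Finset.card_filter, Nat.cast_sum]
      exact Finset.sum_congr rfl fun j _ => by split <;> simp
    rw [hEq]
    exact Finset.measurable_sum _ fun j _ =>
      Measurable.ite ((hT.iterate j) (hΩ j)) measurable_const measurable_const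
  set B : Set Λ := {x | Nf x < κ * n} with hB
  have hBmeas : MeasurableSet B := measurableSet_lt hNfmeas measurable_const
  have hldpB : ν B < ENNReal.ofReal (2 * Real.exp (-(κ * n))) := by
    have hseteq : {x | (({j | 1 ≤ j ∧ j ≤ n ∧ T^[j] x ∈ Ω j} : Set ℕ).ncard : ℝ) < κ * n}
        = B := by
      ext x
      have hncard : ({j | 1 ≤ j ∧ j ≤ n ∧ T^[j] x ∈ Ω j} : Set ℕ).ncard
          = ((Finset.Icc 1 n).filter fun j => T^[j] x ∈ Ω j).card := by
        rw [← Set.ncard_coe_finset]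
        congr 1
        ext j
        simp [Finset.mem_Icc, and_assoc]
      simp only [hB, hNf, Set.mem_setOf_eq, hncard]
    exact hseteq ▸ hldp n hn
  -- pointwise bound on the good set
  have hWgood : ∀ x ∉ B, dolgW η ζ T Ω n x ≤ η ^ (κ * (n : ℝ)) * ζ ^ n := by
    intro x hx
    have hκn : κ * (n : ℝ)
        ≤ (((Finset.Icc 1 n).filter fun j => T^[j] x ∈ Ω j).card : ℝ) := by
      have := not_lt.1 (by simpa [hB, hNf] using hx)
      simpa [hNf] using this
    have hsplit : dolgW η ζ T Ω n x
        = η ^ (((Finset.Icc 1 n).filter fun j => T^[j] x ∈ Ω j).card)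
          * ζ ^ (((Finset.Icc 1 n).filter fun j => ¬ T^[j] x ∈ Ω j).card) := by
      unfold dolgW
      rw [Finset.prod_ite, Finset.prod_const, Finset.prod_const]
    rw [hsplit]
    have hcard : ((Finset.Icc 1 n).filter fun j => ¬ T^[j] x ∈ Ω j).card ≤ n := by
      simpa [Nat.card_Icc] using Finset.card_filter_le (Finset.Icc 1 n)
        (fun j => ¬ T^[j] x ∈ Ω j)
    refine mul_le_mul ?_ (pow_le_pow_right₀ hζ hcard) (by positivity)
      (Real.rpow_nonneg hη0.le _)
    rw [← Real.rpow_natCast η]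
    exact Real.rpow_le_rpow_of_exponent_ge hη0 hη1.le hκn
  -- the split of the integral of the weight
  have hsplitI : ∫ x, dolgW η ζ T Ω n x ∂ν
      = (∫ x in B, dolgW η ζ T Ω n x ∂ν) + ∫ x in Bᶜ, dolgW η ζ T Ω n x ∂ν :=
    (integral_add_compl hBmeas hWint).symm
  have hb1 : ∫ x in B, dolgW η ζ T Ω n x ∂ν ≤ ζ ^ n * (2 * Real.exp (-(κ * n))) := by
    calc ∫ x in B, dolgW η ζ T Ω n x ∂ν ≤ ∫ _x in B, ζ ^ n ∂ν :=
          setIntegral_mono_on hWint.integrableOn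
            (integrableOn_const (measure_lt_top ν B).ne) hBmeas
            (fun x _ => hWle n x)
      _ = (ν B).toReal * ζ ^ n := by rw [setIntegral_const, smul_eq_mul]; rfl
      _ ≤ (2 * Real.exp (-(κ * n))) * ζ ^ n :=
          mul_le_mul_of_nonneg_right
            (ENNReal.toReal_le_of_le_ofReal (by positivity) hldpB.le) (by positivity)
      _ = ζ ^ n * (2 * Real.exp (-(κ * n))) := mul_comm _ _
  have hb2 : ∫ x in Bᶜ, dolgW η ζ T Ω n x ∂ν ≤ η ^ (κ * (n : ℝ)) * ζ ^ n := by
    have hν1 : (ν Bᶜ).toReal ≤ 1 := by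
      refine ENNReal.toReal_le_of_le_ofReal zero_le_one ?_
      rw [ENNReal.ofReal_one]
      exact (measure_mono (Set.subset_univ _)).trans_eq measure_univ
    calc ∫ x in Bᶜ, dolgW η ζ T Ω n x ∂ν
        ≤ ∫ _x in Bᶜ, η ^ (κ * (n : ℝ)) * ζ ^ n ∂ν :=
          setIntegral_mono_on hWint.integrableOn
            (integrableOn_const (measure_lt_top ν Bᶜ).ne) hBmeas.compl
            (fun x hx => hWgood x hx)
      _ = (ν Bᶜ).toReal * (η ^ (κ * (n : ℝ)) * ζ ^ n) := by
          rw [setIntegral_const, smul_eq_mul]; rfl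
      _ ≤ 1 * (η ^ (κ * (n : ℝ)) * ζ ^ n) :=
          mul_le_mul_of_nonneg_right hν1 (by positivity)
      _ = η ^ (κ * (n : ℝ)) * ζ ^ n := one_mul _
  calc ∫ x, h n x ^ 2 ∂ν
      ≤ ∫ x, (dolgLop p γ)^[n] (fun y => dolgW η ζ T Ω n y * h 0 y ^ 2) x ∂ν := hint1
    _ = ∫ x, dolgW η ζ T Ω n x * h 0 x ^ 2 ∂ν := hint2
    _ ≤ ∫ x, M ^ 2 * dolgW η ζ T Ω n x ∂ν := hint3
    _ = M ^ 2 * ∫ x, dolgW η ζ T Ω n x ∂ν := hint4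
    _ ≤ M ^ 2 * (ζ ^ n * (2 * Real.exp (-(κ * n))) + η ^ (κ * (n : ℝ)) * ζ ^ n) := by
        refine mul_le_mul_of_nonneg_left ?_ (by positivity)
        rw [hsplitI]
        exact add_le_add hb1 hb2
    _ = ζ ^ n * (η ^ (κ * (n : ℝ)) + 2 * Real.exp (-(κ * n))) * M ^ 2 := by ring
end
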